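/- Let m > 0 and let A, B be Hermitian d×d complex matrices with A ≥ m·1 and B ≥ m·1 (all eigenvalues at least m). Then ‖log A − log B‖ ≤ m^{−1} ‖A − B‖, where log denotes the matrix logarithm of a positive definite matrix (via the functional calculus) and ‖·‖ is the operator norm. -/

import Mathlib

open scoped Matrix.Norms.L2Operator ComplexOrder

/-- The logarithm of a positive definite Hermitian matrix, defined via the spectral
decomposition by applying the real logarithm to the eigenvalues (junk value `0` on
non-Hermitian input). -/
noncomputable def matLog {d : ℕ} (A : Matrix (Fin d) (Fin d) ℂ) : Matrix (Fin d) (Fin d) ℂ :=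
  if hA : A.IsHermitian then
    (hA.eigenvectorUnitary : Matrix (Fin d) (Fin d) ℂ) *
      Matrix.diagonal (fun i => (Real.log (hA.eigenvalues i) : ℂ)) *
      star (hA.eigenvectorUnitary : Matrix (Fin d) (Fin d) ℂ)
  else 0


open MeasureTheory Set Filter
open scoped Matrix


lemma invsq_integrableOn {c : ℝ} (hc : 0 < c) :
    IntegrableOn (fun t : ℝ => ((t + c) ^ 2)⁻¹) (Ioi 0) := by
  have hderiv : ∀ x ∈ Ioi (0:ℝ), HasDerivAt (fun t : ℝ => -(t + c)⁻¹) (((x + c) ^ 2)⁻¹) x := by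
    intro x hx
    have hx0 : (0:ℝ) < x := hx
    have hne : x + c ≠ 0 := by intro h; nlinarith
    have h := (((hasDerivAt_id x).add_const c).inv hne).neg
    convert h using 1
    · rfl
    · rfl
    · rfl
    · simp [neg_div, one_div]
  have hcont : ContinuousWithinAt (fun t : ℝ => -(t + c)⁻¹) (Ici 0) 0 := by
    apply ContinuousAt.continuousWithinAt
    have hne : (0:ℝ) + c ≠ 0 := by positivity
    exact ((continuousAt_id.add continuousAt_const).inv₀ hne).neg
  have htend : Tendsto (fun t : ℝ => -(t + c)⁻¹) atTop (nhds 0) := by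
    have : Tendsto (fun t : ℝ => (t + c)⁻¹) atTop (nhds 0) :=
      tendsto_inv_atTop_zero.comp (tendsto_atTop_add_const_right _ c tendsto_id)
    simpa using this.neg
  exact integrableOn_Ioi_deriv_of_nonneg hcont hderiv (fun x hx => by positivity) htend

lemma invsq_integral {c : ℝ} (hc : 0 < c) :
    ∫ t in Ioi (0:ℝ), ((t + c) ^ 2)⁻¹ = c⁻¹ := by
  have hderiv : ∀ x ∈ Ioi (0:ℝ), HasDerivAt (fun t : ℝ => -(t + c)⁻¹) (((x + c) ^ 2)⁻¹) x := by
    intro x hx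
    have hx0 : (0:ℝ) < x := hx
    have hne : x + c ≠ 0 := by intro h; nlinarith
    have h := (((hasDerivAt_id x).add_const c).inv hne).neg
    convert h using 1
    · rfl
    · rfl
    · rfl
    · simp [neg_div, one_div]
  have hcont : ContinuousWithinAt (fun t : ℝ => -(t + c)⁻¹) (Ici 0) 0 := by
    apply ContinuousAt.continuousWithinAt
    have hne : (0:ℝ) + c ≠ 0 := by positivity
    exact ((continuousAt_id.add continuousAt_const).inv₀ hne).neg
  have htend : Tendsto (fun t : ℝ => -(t + c)⁻¹) atTop (nhds 0) := by
    have : Tendsto (fun t : ℝ => (t + c)⁻¹) atTop (nhds 0) :=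
      tendsto_inv_atTop_zero.comp (tendsto_atTop_add_const_right _ c tendsto_id)
    simpa using this.neg
  rw [integral_Ioi_of_hasDerivAt_of_tendsto hcont hderiv (invsq_integrableOn hc) htend]
  simp
lemma hfun_integrableOn {x : ℝ} (hx : 0 < x) :
    IntegrableOn (fun t : ℝ => (t + 1)⁻¹ - (t + x)⁻¹) (Ioi 0) := by
  set c := min 1 x with hc
  have hc0 : 0 < c := lt_min one_pos hx
  have hbound : ∀ t ∈ Ioi (0:ℝ), ‖(t + 1)⁻¹ - (t + x)⁻¹‖ ≤ |x - 1| * ((t + c) ^ 2)⁻¹ := by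
    intro t ht
    have ht0 : (0:ℝ) < t := ht
    have h1 : (0:ℝ) < t + 1 := by linarith
    have h2 : (0:ℝ) < t + x := by linarith
    have h3 : (0:ℝ) < t + c := by linarith
    have hid : (t + 1)⁻¹ - (t + x)⁻¹ = (x - 1) / ((t + 1) * (t + x)) := by
      field_simp
      ring
    rw [hid, Real.norm_eq_abs, abs_div, abs_of_pos (mul_pos h1 h2), div_eq_mul_inv]
    apply mul_le_mul_of_nonneg_left _ (abs_nonneg _)
    apply inv_anti₀ (pow_pos h3 2)
    have hca : t + c ≤ t + 1 := by have := min_le_left 1 x; linarith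
    have hcb : t + c ≤ t + x := by have := min_le_right 1 x; linarith
    nlinarith
  have hmeas : AEStronglyMeasurable (fun t : ℝ => (t + 1)⁻¹ - (t + x)⁻¹)
      (volume.restrict (Ioi 0)) := by
    apply ContinuousOn.aestronglyMeasurable _ measurableSet_Ioi
    intro t ht
    have ht0 : (0:ℝ) < t := ht
    apply ContinuousWithinAt.sub
    · exact ((continuousAt_id.add continuousAt_const).inv₀
        (by simp only [Pi.add_apply, id_eq]; intro h; nlinarith)).continuousWithinAt
    · exact ((continuousAt_id.add continuousAt_const).inv₀
        (by simp only [Pi.add_apply, id_eq]; intro h; nlinarith)).continuousWithinAt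
  apply Integrable.mono' ((invsq_integrableOn hc0).const_mul (|x - 1|)) hmeas
  exact (ae_restrict_iff' measurableSet_Ioi).2 (ae_of_all _ hbound)

lemma hfun_integral {x : ℝ} (hx : 0 < x) :
    ∫ t in Ioi (0:ℝ), ((t + 1)⁻¹ - (t + x)⁻¹) = Real.log x := by
  have hderiv : ∀ t ∈ Ioi (0:ℝ),
      HasDerivAt (fun t : ℝ => Real.log (t + 1) - Real.log (t + x))
        ((t + 1)⁻¹ - (t + x)⁻¹) t := by
    intro t ht
    have ht0 : (0:ℝ) < t := ht
    have h1 : t + 1 ≠ 0 := by intro h; nlinarith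
    have h2 : t + x ≠ 0 := by intro h; nlinarith
    have d1 := (((hasDerivAt_id t).add_const 1).log (by simpa using h1))
    have d2 := (((hasDerivAt_id t).add_const x).log (by simpa using h2))
    have h := d1.sub d2
    simp [one_div] at h
    exact h
  have hcont : ContinuousWithinAt (fun t : ℝ => Real.log (t + 1) - Real.log (t + x))
      (Ici 0) 0 := by
    have h1 : (0:ℝ) + 1 ≠ 0 := by norm_num
    have h2 : (0:ℝ) + x ≠ 0 := by intro h; nlinarith
    have c1 : ContinuousAt (fun t : ℝ => Real.log (t + 1)) 0 :=
      ((((hasDerivAt_id (0:ℝ)).add_const 1).log (by simpa using h1)).continuousAt)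
    have c2 : ContinuousAt (fun t : ℝ => Real.log (t + x)) 0 :=
      ((((hasDerivAt_id (0:ℝ)).add_const x).log (by simpa using h2)).continuousAt)
    exact (c1.sub c2).continuousWithinAt
  have htend : Tendsto (fun t : ℝ => Real.log (t + 1) - Real.log (t + x)) atTop (nhds 0) := by
    have hev : (fun t : ℝ => Real.log ((t + 1) / (t + x)))
        =ᶠ[atTop] fun t => Real.log (t + 1) - Real.log (t + x) := by
      filter_upwards [eventually_gt_atTop (0:ℝ)] with t ht
      rw [Real.log_div (by intro h; nlinarith) (by intro h; nlinarith)]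
    have hratio : Tendsto (fun t : ℝ => (t + 1) / (t + x)) atTop (nhds 1) := by
      have hev2 : (fun t : ℝ => 1 + (1 - x) * (t + x)⁻¹)
          =ᶠ[atTop] fun t => (t + 1) / (t + x) := by
        filter_upwards [eventually_gt_atTop (0:ℝ)] with t ht
        have h2 : t + x ≠ 0 := by intro h; nlinarith
        field_simp
        ring
      have hlim : Tendsto (fun t : ℝ => 1 + (1 - x) * (t + x)⁻¹) atTop (nhds (1 + (1 - x) * 0)) :=
        tendsto_const_nhds.add (tendsto_const_nhds.mul
          (tendsto_inv_atTop_zero.comp (tendsto_atTop_add_const_right _ x tendsto_id)))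
      simpa using hlim.congr' hev2
    have hcomp := (Real.continuousAt_log one_ne_zero).tendsto.comp hratio
    have : Tendsto (fun t : ℝ => Real.log ((t + 1) / (t + x))) atTop (nhds (Real.log 1)) := by
      exact hcomp
    simpa [Real.log_one] using this.congr' hev
  rw [integral_Ioi_of_hasDerivAt_of_tendsto hcont hderiv (hfun_integrableOn hx) htend]
  simp [Real.log_one]
open scoped Matrix Matrix.Norms.L2Operator ComplexOrder

lemma matnorm_one_le (d : ℕ) : ‖(1 : Matrix (Fin d) (Fin d) ℂ)‖ ≤ 1 := by
  have h : ‖(1 : Matrix (Fin d) (Fin d) ℂ)‖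
      = ‖(Matrix.toEuclideanCLM (𝕜 := ℂ) (n := Fin d)) 1‖ := Matrix.cstar_norm_def 1
  rw [h, map_one]
  exact ContinuousLinearMap.norm_id_le

lemma matnorm_unitary_le {d : ℕ} (U : Matrix.unitaryGroup (Fin d) ℂ) :
    ‖(U : Matrix (Fin d) (Fin d) ℂ)‖ ≤ 1 := by
  have h := Matrix.l2_opNorm_conjTranspose_mul_self (U : Matrix (Fin d) (Fin d) ℂ)
  rw [← Matrix.star_eq_conjTranspose, U.2.1] at h
  have h1 := matnorm_one_le d
  rw [h] at h1
  nlinarith [norm_nonneg (U : Matrix (Fin d) (Fin d) ℂ)]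

set_option maxHeartbeats 2000000 in
lemma matnorm_diagonal_le {d : ℕ} (v : Fin d → ℂ) (c : ℝ) (hc : 0 ≤ c)
    (hv : ∀ i, ‖v i‖ ≤ c) : ‖Matrix.diagonal v‖ ≤ c := by
  rw [Matrix.l2_opNorm_def]
  apply ContinuousLinearMap.opNorm_le_bound _ hc
  intro x
  have hx : ‖x‖ = Real.sqrt (∑ i, ‖x i‖ ^ 2) := EuclideanSpace.norm_eq x
  have happ : ((Matrix.toEuclideanLin ≪≫ₗ LinearMap.toContinuousLinearMap)
      (Matrix.diagonal v)) x = Matrix.toEuclideanLin (Matrix.diagonal v) x := by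
    simp [LinearEquiv.trans_apply, LinearMap.coe_toContinuousLinearMap']
  rw [happ, Matrix.toEuclideanLin_apply]
  rw [EuclideanSpace.norm_eq]
  have hterm : ∀ i, ‖((WithLp.equiv 2 (Fin d → ℂ)).symm
      (Matrix.diagonal v *ᵥ (WithLp.equiv 2 (Fin d → ℂ)) x)) i‖ ^ 2 ≤ c ^ 2 * ‖x i‖ ^ 2 := by
    intro i
    have : ((WithLp.equiv 2 (Fin d → ℂ)).symm
        (Matrix.diagonal v *ᵥ (WithLp.equiv 2 (Fin d → ℂ)) x)) i = v i * x i := by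
      simp [Matrix.mulVec_diagonal]
    rw [this, norm_mul, mul_pow]
    have h1 : ‖v i‖ ^ 2 ≤ c ^ 2 := by nlinarith [norm_nonneg (v i), hv i]
    nlinarith [norm_nonneg (x i), sq_nonneg (‖x i‖)]
  calc Real.sqrt (∑ i, ‖((WithLp.equiv 2 (Fin d → ℂ)).symm
        (Matrix.diagonal v *ᵥ (WithLp.equiv 2 (Fin d → ℂ)) x)) i‖ ^ 2)
      ≤ Real.sqrt (∑ i, c ^ 2 * ‖x i‖ ^ 2) :=
        Real.sqrt_le_sqrt (Finset.sum_le_sum fun i _ => hterm i)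
    _ = Real.sqrt (c ^ 2 * ∑ i, ‖x i‖ ^ 2) := by rw [Finset.mul_sum]
    _ = c * Real.sqrt (∑ i, ‖x i‖ ^ 2) := by
        rw [Real.sqrt_mul (sq_nonneg c), Real.sqrt_sq hc]
    _ = c * ‖x‖ := by rw [hx]

lemma matnorm_conj_le {d : ℕ} (U : Matrix.unitaryGroup (Fin d) ℂ)
    (M : Matrix (Fin d) (Fin d) ℂ) :
    ‖(U : Matrix (Fin d) (Fin d) ℂ) * M * star (U : Matrix (Fin d) (Fin d) ℂ)‖ ≤ ‖M‖ := by
  have h1 := Matrix.l2_opNorm_mul ((U : Matrix (Fin d) (Fin d) ℂ) * M)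
    (star (U : Matrix (Fin d) (Fin d) ℂ))
  have h2 := Matrix.l2_opNorm_mul (U : Matrix (Fin d) (Fin d) ℂ) M
  have h3 : ‖star (U : Matrix (Fin d) (Fin d) ℂ)‖ = ‖(U : Matrix (Fin d) (Fin d) ℂ)‖ := by
    rw [Matrix.star_eq_conjTranspose]
    exact Matrix.l2_opNorm_conjTranspose _
  have h4 := matnorm_unitary_le U
  have h5 : (0:ℝ) ≤ ‖M‖ := norm_nonneg M
  nlinarith [norm_nonneg ((U : Matrix (Fin d) (Fin d) ℂ) * M),
    norm_nonneg (star (U : Matrix (Fin d) (Fin d) ℂ)), norm_nonneg (U : Matrix (Fin d) (Fin d) ℂ)]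

lemma real_smul_mat {d : ℕ} (t : ℝ) (M : Matrix (Fin d) (Fin d) ℂ) :
    t • M = ((t : ℂ)) • M := by
  ext i j
  simp [Matrix.smul_apply, Complex.real_smul]

lemma spec_eq {d : ℕ} {A : Matrix (Fin d) (Fin d) ℂ} (hA : A.IsHermitian) :
    A = (hA.eigenvectorUnitary : Matrix (Fin d) (Fin d) ℂ) *
      Matrix.diagonal (RCLike.ofReal ∘ hA.eigenvalues) *
      star (hA.eigenvectorUnitary : Matrix (Fin d) (Fin d) ℂ) := by
  conv_lhs => rw [hA.spectral_theorem]
  rw [Unitary.conjStarAlgAut_apply]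

lemma eig_ge {d : ℕ} {m : ℝ} {A : Matrix (Fin d) (Fin d) ℂ} (hA : A.IsHermitian)
    (hAm : (A - m • (1 : Matrix (Fin d) (Fin d) ℂ)).PosSemidef) (i : Fin d) :
    m ≤ hA.eigenvalues i := by
  set Um : Matrix (Fin d) (Fin d) ℂ := (hA.eigenvectorUnitary : Matrix (Fin d) (Fin d) ℂ)
    with hUm
  have hsU : star Um * Um = 1 := hA.eigenvectorUnitary.2.1
  have hAU : star Um * A * Um = Matrix.diagonal (fun i => (hA.eigenvalues i : ℂ)) := by
    conv_lhs => rw [spec_eq hA]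
    have h : star Um * (Um * Matrix.diagonal (RCLike.ofReal ∘ hA.eigenvalues) * star Um) * Um
        = (star Um * Um) * Matrix.diagonal (RCLike.ofReal ∘ hA.eigenvalues) * (star Um * Um) := by
      noncomm_ring
    rw [h, hsU, one_mul, mul_one]
    rfl
  have key : star Um * (A - m • 1) * Um
      = Matrix.diagonal (fun i => (hA.eigenvalues i : ℂ) - (m : ℂ)) := by
    have hsm : star Um * (m • (1 : Matrix (Fin d) (Fin d) ℂ)) * Um
        = m • (1 : Matrix (Fin d) (Fin d) ℂ) := by
      rw [real_smul_mat, Matrix.mul_smul, Matrix.smul_mul, mul_one, hsU]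
    rw [Matrix.mul_sub, Matrix.sub_mul, hsm, hAU, real_smul_mat, Matrix.smul_one_eq_diagonal,
      Matrix.diagonal_sub]
  have hpsd := hAm.conjTranspose_mul_mul_same Um
  rw [← Matrix.star_eq_conjTranspose] at hpsd
  rw [key] at hpsd
  have h0 := (Matrix.posSemidef_diagonal_iff.mp hpsd) i
  rw [sub_nonneg] at h0
  exact_mod_cast h0

/-- Spectral form of `t • 1 + A`. -/
lemma shift_spec {d : ℕ} {A : Matrix (Fin d) (Fin d) ℂ} (hA : A.IsHermitian) (t : ℝ) :
    t • (1 : Matrix (Fin d) (Fin d) ℂ) + A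
      = (hA.eigenvectorUnitary : Matrix (Fin d) (Fin d) ℂ) *
          Matrix.diagonal (fun i => (t : ℂ) + (hA.eigenvalues i : ℂ)) *
          star (hA.eigenvectorUnitary : Matrix (Fin d) (Fin d) ℂ) := by
  set Um : Matrix (Fin d) (Fin d) ℂ := (hA.eigenvectorUnitary : Matrix (Fin d) (Fin d) ℂ)
    with hUm
  have hUs : Um * star Um = 1 := hA.eigenvectorUnitary.2.2
  have h1 : (fun i => (t : ℂ) + (hA.eigenvalues i : ℂ))
      = fun i => (t : ℂ) + (RCLike.ofReal ∘ hA.eigenvalues) i := rfl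
  rw [h1]
  have h2 : Matrix.diagonal (fun i => (t : ℂ) + (RCLike.ofReal ∘ hA.eigenvalues) i)
      = (t : ℂ) • (1 : Matrix (Fin d) (Fin d) ℂ)
        + Matrix.diagonal (RCLike.ofReal ∘ hA.eigenvalues) := by
    rw [Matrix.smul_one_eq_diagonal, Matrix.diagonal_add]
  rw [h2, Matrix.mul_add, Matrix.add_mul, ← spec_eq hA]
  congr 1
  rw [Matrix.mul_smul, Matrix.smul_mul, mul_one, hUs, real_smul_mat]

/-- conjugated product of diagonals -/
lemma conj_mul_conj {d : ℕ} (U : Matrix.unitaryGroup (Fin d) ℂ)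
    (D₁ D₂ : Matrix (Fin d) (Fin d) ℂ) :
    ((U : Matrix (Fin d) (Fin d) ℂ) * D₁ * star (U : Matrix (Fin d) (Fin d) ℂ)) *
      ((U : Matrix (Fin d) (Fin d) ℂ) * D₂ * star (U : Matrix (Fin d) (Fin d) ℂ))
    = (U : Matrix (Fin d) (Fin d) ℂ) * (D₁ * D₂) * star (U : Matrix (Fin d) (Fin d) ℂ) := by
  set Um : Matrix (Fin d) (Fin d) ℂ := (U : Matrix (Fin d) (Fin d) ℂ) with hUm
  have hsU : star Um * Um = 1 := U.2.1
  have h : (Um * D₁ * star Um) * (Um * D₂ * star Um)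
      = Um * D₁ * (star Um * Um) * (D₂ * star Um) := by noncomm_ring
  rw [h, hsU, mul_one]
  noncomm_ring

lemma habs_bound {x c : ℝ} (hc : 0 < c) (hc1 : c ≤ 1) (hcx : c ≤ x) {t : ℝ} (ht : 0 < t) :
    |(t + 1)⁻¹ - (t + x)⁻¹| ≤ |x - 1| * ((t + c) ^ 2)⁻¹ := by
  have hx : 0 < x := lt_of_lt_of_le hc hcx
  have h1 : (0:ℝ) < t + 1 := by linarith
  have h2 : (0:ℝ) < t + x := by linarith
  have h3 : (0:ℝ) < t + c := by linarith
  have hid : (t + 1)⁻¹ - (t + x)⁻¹ = (x - 1) / ((t + 1) * (t + x)) := by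
    field_simp
    ring
  rw [hid, abs_div, abs_of_pos (mul_pos h1 h2), div_eq_mul_inv]
  apply mul_le_mul_of_nonneg_left _ (abs_nonneg _)
  apply inv_anti₀ (pow_pos h3 2)
  nlinarith

namespace MatLogAux

noncomputable def resolv {d : ℕ} (A : Matrix (Fin d) (Fin d) ℂ) (hA : A.IsHermitian) (t : ℝ) :
    Matrix (Fin d) (Fin d) ℂ :=
  (hA.eigenvectorUnitary : Matrix (Fin d) (Fin d) ℂ) *
    Matrix.diagonal (fun i => ((t : ℂ) + (hA.eigenvalues i : ℂ))⁻¹) *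
    star (hA.eigenvectorUnitary : Matrix (Fin d) (Fin d) ℂ)

noncomputable def gmat {d : ℕ} (A : Matrix (Fin d) (Fin d) ℂ) (hA : A.IsHermitian) (t : ℝ) :
    Matrix (Fin d) (Fin d) ℂ :=
  (hA.eigenvectorUnitary : Matrix (Fin d) (Fin d) ℂ) *
    Matrix.diagonal (fun i => (((t + 1)⁻¹ - (t + hA.eigenvalues i)⁻¹ : ℝ) : ℂ)) *
    star (hA.eigenvectorUnitary : Matrix (Fin d) (Fin d) ℂ)

variable {d : ℕ} {m : ℝ} {A : Matrix (Fin d) (Fin d) ℂ} (hA : A.IsHermitian)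

lemma diag_ne {t : ℝ} (hm : 0 < m) (hα : ∀ i, m ≤ hA.eigenvalues i) (ht : 0 < t) (i : Fin d) :
    (t : ℂ) + (hA.eigenvalues i : ℂ) ≠ 0 := by
  have : ((t + hA.eigenvalues i : ℝ) : ℂ) ≠ 0 := by
    rw [Complex.ofReal_ne_zero]
    have := hα i
    intro h; nlinarith
  simpa using this

lemma resolv_mul_shift (hm : 0 < m) (hα : ∀ i, m ≤ hA.eigenvalues i) {t : ℝ} (ht : 0 < t) :
    resolv A hA t * (t • (1 : Matrix (Fin d) (Fin d) ℂ) + A) = 1 := by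
  rw [shift_spec hA t, resolv, conj_mul_conj, Matrix.diagonal_mul_diagonal]
  have h : (fun i => ((t : ℂ) + (hA.eigenvalues i : ℂ))⁻¹ * ((t : ℂ) + (hA.eigenvalues i : ℂ)))
      = fun _ => (1 : ℂ) := by
    funext i
    exact inv_mul_cancel₀ (diag_ne hA hm hα ht i)
  rw [h, Matrix.diagonal_one, mul_one, hA.eigenvectorUnitary.2.2]

lemma shift_mul_resolv (hm : 0 < m) (hα : ∀ i, m ≤ hA.eigenvalues i) {t : ℝ} (ht : 0 < t) :
    (t • (1 : Matrix (Fin d) (Fin d) ℂ) + A) * resolv A hA t = 1 := by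
  rw [shift_spec hA t, resolv, conj_mul_conj, Matrix.diagonal_mul_diagonal]
  have h : (fun i => ((t : ℂ) + (hA.eigenvalues i : ℂ)) * ((t : ℂ) + (hA.eigenvalues i : ℂ))⁻¹)
      = fun _ => (1 : ℂ) := by
    funext i
    exact mul_inv_cancel₀ (diag_ne hA hm hα ht i)
  rw [h, Matrix.diagonal_one, mul_one, hA.eigenvectorUnitary.2.2]

lemma resolv_norm_le (hm : 0 < m) (hα : ∀ i, m ≤ hA.eigenvalues i) {t : ℝ} (ht : 0 ≤ t) :
    ‖resolv A hA t‖ ≤ (t + m)⁻¹ := by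
  refine le_trans (matnorm_conj_le _ _) ?_
  apply matnorm_diagonal_le _ _ (by positivity)
  intro i
  have h1 : (0:ℝ) < t + m := by linarith
  have h2 : (0:ℝ) < t + hA.eigenvalues i := by have := hα i; linarith
  have : ((t : ℂ) + (hA.eigenvalues i : ℂ))⁻¹ = (((t + hA.eigenvalues i : ℝ) : ℂ))⁻¹ := by
    push_cast; ring
  rw [this, ← Complex.ofReal_inv, Complex.norm_real, Real.norm_eq_abs,
    abs_of_pos (inv_pos.mpr h2)]
  exact inv_anti₀ h1 (by have := hα i; linarith)

lemma gmat_eq (t : ℝ) :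
    gmat A hA t = (((t + 1)⁻¹ : ℝ) : ℂ) • (1 : Matrix (Fin d) (Fin d) ℂ) - resolv A hA t := by
  rw [gmat, resolv]
  have h : (fun i => (((t + 1)⁻¹ - (t + hA.eigenvalues i)⁻¹ : ℝ) : ℂ))
      = fun i => (((t + 1)⁻¹ : ℝ) : ℂ) - ((t : ℂ) + (hA.eigenvalues i : ℂ))⁻¹ := by
    funext i
    push_cast
    ring
  rw [h, ← Matrix.diagonal_sub (fun _ => (((t + 1)⁻¹ : ℝ) : ℂ))
    (fun i => ((t : ℂ) + (hA.eigenvalues i : ℂ))⁻¹), Matrix.mul_sub, Matrix.sub_mul]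
  congr 1
  rw [← Matrix.smul_one_eq_diagonal, Matrix.mul_smul, Matrix.smul_mul, mul_one,
    hA.eigenvectorUnitary.2.2]

lemma gmat_entry (t : ℝ) (i j : Fin d) :
    gmat A hA t i j = ∑ k, (hA.eigenvectorUnitary : Matrix (Fin d) (Fin d) ℂ) i k *
      (((t + 1)⁻¹ - (t + hA.eigenvalues k)⁻¹ : ℝ) : ℂ) *
      (star (hA.eigenvectorUnitary : Matrix (Fin d) (Fin d) ℂ)) k j := by
  rw [gmat, Matrix.mul_apply]
  congr 1
  funext k
  rw [Matrix.mul_diagonal]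

lemma gmat_integrableOn (hm : 0 < m) (hα : ∀ i, m ≤ hA.eigenvalues i) :
    IntegrableOn (gmat A hA) (Ioi 0) volume := by
  set c₀ := min 1 m with hc₀
  have hc0 : 0 < c₀ := lt_min one_pos hm
  set K := ∑ i, |hA.eigenvalues i - 1| with hK
  have hK0 : 0 ≤ K := Finset.sum_nonneg fun i _ => abs_nonneg _
  have hbound : ∀ t ∈ Ioi (0:ℝ), ‖gmat A hA t‖ ≤ K * ((t + c₀) ^ 2)⁻¹ := by
    intro t ht
    have ht0 : (0:ℝ) < t := ht
    refine le_trans (matnorm_conj_le _ _) ?_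
    apply matnorm_diagonal_le _ _ (by positivity)
    intro i
    rw [Complex.norm_real, Real.norm_eq_abs]
    have h1 : |(t + 1)⁻¹ - (t + hA.eigenvalues i)⁻¹|
        ≤ |hA.eigenvalues i - 1| * ((t + c₀) ^ 2)⁻¹ :=
      habs_bound hc0 (min_le_left _ _) (le_trans (min_le_right _ _) (hα i)) ht0
    refine le_trans h1 ?_
    apply mul_le_mul_of_nonneg_right _ (by positivity)
    exact Finset.single_le_sum (f := fun k : Fin d => |hA.eigenvalues k - 1|)
      (fun k _ => abs_nonneg _) (Finset.mem_univ i)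
  have hmeas : AEStronglyMeasurable (gmat A hA) (volume.restrict (Ioi 0)) := by
    apply ContinuousOn.aestronglyMeasurable _ measurableSet_Ioi
    have hΦ : Continuous (fun v : Fin d → ℂ =>
        (hA.eigenvectorUnitary : Matrix (Fin d) (Fin d) ℂ) * Matrix.diagonal v *
          star (hA.eigenvectorUnitary : Matrix (Fin d) (Fin d) ℂ)) :=
      (continuous_const.matrix_mul (continuous_id.matrix_diagonal)).matrix_mul continuous_const
    have hw : ContinuousOn (fun t : ℝ => fun i : Fin d =>
        (((t + 1)⁻¹ - (t + hA.eigenvalues i)⁻¹ : ℝ) : ℂ)) (Ioi 0) := by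
      apply continuousOn_pi.mpr
      intro i
      apply Complex.continuous_ofReal.comp_continuousOn
      intro t ht
      have ht0 : (0:ℝ) < t := ht
      apply ContinuousWithinAt.sub
      · exact ((continuousAt_id.add continuousAt_const).inv₀
          (by simp only [Pi.add_apply, id_eq]; intro h; nlinarith)).continuousWithinAt
      · exact ((continuousAt_id.add continuousAt_const).inv₀
          (by simp only [Pi.add_apply, id_eq]; have := hα i; intro h; nlinarith)).continuousWithinAt
    exact hΦ.comp_continuousOn hw
  apply Integrable.mono' (((invsq_integrableOn hc0).const_mul K)) hmeas
  exact (ae_restrict_iff' measurableSet_Ioi).2 (ae_of_all _ hbound)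

set_option maxHeartbeats 1000000 in
lemma gmat_integral (hm : 0 < m) (hα : ∀ i, m ≤ hA.eigenvalues i) :
    ∫ t in Ioi (0:ℝ), gmat A hA t
      = (hA.eigenvectorUnitary : Matrix (Fin d) (Fin d) ℂ) *
          Matrix.diagonal (fun i => (Real.log (hA.eigenvalues i) : ℂ)) *
          star (hA.eigenvectorUnitary : Matrix (Fin d) (Fin d) ℂ) := by
  have hint := gmat_integrableOn hA hm hα
  ext i j
  set E := LinearMap.toContinuousLinearMap (Matrix.entryLinearMap ℂ ℂ i j) with hE
  have hEapp : ∀ M : Matrix (Fin d) (Fin d) ℂ, E M = M i j := by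
    intro M
    simp [hE, LinearMap.coe_toContinuousLinearMap', Matrix.entryLinearMap_apply]
  have hcomm := E.integral_comp_comm hint
  have hl : (∫ t in Ioi (0:ℝ), gmat A hA t) i j = ∫ t in Ioi (0:ℝ), gmat A hA t i j := by
    rw [← hEapp (∫ t in Ioi (0:ℝ), gmat A hA t), ← hcomm]
    exact integral_congr_ae (ae_of_all _ fun t => hEapp _)
  rw [hl]
  have hterm : ∀ k : Fin d, IntegrableOn (fun t : ℝ =>
      (hA.eigenvectorUnitary : Matrix (Fin d) (Fin d) ℂ) i k *
      (((t + 1)⁻¹ - (t + hA.eigenvalues k)⁻¹ : ℝ) : ℂ) *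
      (star (hA.eigenvectorUnitary : Matrix (Fin d) (Fin d) ℂ)) k j) (Ioi 0) volume := by
    intro k
    have hx : (0:ℝ) < hA.eigenvalues k := lt_of_lt_of_le hm (hα k)
    exact (((hfun_integrableOn hx).ofReal.const_mul _).mul_const _)
  calc ∫ t in Ioi (0:ℝ), gmat A hA t i j
      = ∫ t in Ioi (0:ℝ), ∑ k, (hA.eigenvectorUnitary : Matrix (Fin d) (Fin d) ℂ) i k *
          (((t + 1)⁻¹ - (t + hA.eigenvalues k)⁻¹ : ℝ) : ℂ) *
          (star (hA.eigenvectorUnitary : Matrix (Fin d) (Fin d) ℂ)) k j := by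
        apply integral_congr_ae
        apply ae_of_all
        intro t
        exact gmat_entry hA t i j
    _ = ∑ k, ∫ t in Ioi (0:ℝ), (hA.eigenvectorUnitary : Matrix (Fin d) (Fin d) ℂ) i k *
          (((t + 1)⁻¹ - (t + hA.eigenvalues k)⁻¹ : ℝ) : ℂ) *
          (star (hA.eigenvectorUnitary : Matrix (Fin d) (Fin d) ℂ)) k j :=
        integral_finset_sum _ (fun k _ => hterm k)
    _ = ∑ k, (hA.eigenvectorUnitary : Matrix (Fin d) (Fin d) ℂ) i k *
          (Real.log (hA.eigenvalues k) : ℂ) *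
          (star (hA.eigenvectorUnitary : Matrix (Fin d) (Fin d) ℂ)) k j := by
        apply Finset.sum_congr rfl
        intro k _
        have hx : (0:ℝ) < hA.eigenvalues k := lt_of_lt_of_le hm (hα k)
        simp only [mul_assoc]
        rw [integral_const_mul, integral_mul_const]
        have hval : (∫ (a : ℝ) in Ioi (0:ℝ), (((a + 1)⁻¹ - (a + hA.eigenvalues k)⁻¹ : ℝ) : ℂ))
            = ((Real.log (hA.eigenvalues k) : ℝ) : ℂ) := by
          rw [← hfun_integral hx]
          exact integral_ofReal
        rw [hval]
    _ = ((hA.eigenvectorUnitary : Matrix (Fin d) (Fin d) ℂ) *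
          Matrix.diagonal (fun i => (Real.log (hA.eigenvalues i) : ℂ)) *
          star (hA.eigenvectorUnitary : Matrix (Fin d) (Fin d) ℂ)) i j := by
        rw [Matrix.mul_apply]
        congr 1
        funext k
        rw [Matrix.mul_diagonal]

end MatLogAux


/-- Lipschitz estimate for the matrix logarithm: if `A, B ≥ m·1 > 0` are Hermitian, then
`‖log A - log B‖ ≤ m⁻¹ ‖A - B‖` in operator norm. -/
theorem matLog_lipschitz (d : ℕ) (m : ℝ) (hm : 0 < m)
    (A B : Matrix (Fin d) (Fin d) ℂ) (hA : A.IsHermitian) (hB : B.IsHermitian)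
    (hAm : (A - m • (1 : Matrix (Fin d) (Fin d) ℂ)).PosSemidef)
    (hBm : (B - m • (1 : Matrix (Fin d) (Fin d) ℂ)).PosSemidef) :
    ‖matLog A - matLog B‖ ≤ m⁻¹ * ‖A - B‖ := by
  have hα : ∀ i, m ≤ hA.eigenvalues i := fun i => eig_ge hA hAm i
  have hβ : ∀ i, m ≤ hB.eigenvalues i := fun i => eig_ge hB hBm i
  have hLA : matLog A = ∫ t in Ioi (0:ℝ), MatLogAux.gmat A hA t := by
    rw [MatLogAux.gmat_integral hA hm hα]
    simp only [matLog, dif_pos hA]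
  have hLB : matLog B = ∫ t in Ioi (0:ℝ), MatLogAux.gmat B hB t := by
    rw [MatLogAux.gmat_integral hB hm hβ]
    simp only [matLog, dif_pos hB]
  have hsub : matLog A - matLog B
      = ∫ t in Ioi (0:ℝ), (MatLogAux.gmat A hA t - MatLogAux.gmat B hB t) := by
    rw [hLA, hLB,
      integral_sub (MatLogAux.gmat_integrableOn hA hm hα) (MatLogAux.gmat_integrableOn hB hm hβ)]
  have hbound : ∀ t ∈ Ioi (0:ℝ),
      ‖MatLogAux.gmat A hA t - MatLogAux.gmat B hB t‖ ≤ ‖A - B‖ * ((t + m) ^ 2)⁻¹ := by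
    intro t ht
    have ht0 : (0:ℝ) < t := ht
    have heq : MatLogAux.gmat A hA t - MatLogAux.gmat B hB t
        = MatLogAux.resolv B hB t - MatLogAux.resolv A hA t := by
      rw [MatLogAux.gmat_eq hA, MatLogAux.gmat_eq hB]
      abel
    set RA := MatLogAux.resolv A hA t with hRA
    set RB := MatLogAux.resolv B hB t with hRB
    have h1' : RB * (t • (1 : Matrix (Fin d) (Fin d) ℂ) + A) * RA = RB := by
      rw [mul_assoc, MatLogAux.shift_mul_resolv hA hm hα ht0, mul_one]
    have h2' : RB * (t • (1 : Matrix (Fin d) (Fin d) ℂ) + B) * RA = RA := by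
      rw [MatLogAux.resolv_mul_shift hB hm hβ ht0, one_mul]
    have hS : (t • (1 : Matrix (Fin d) (Fin d) ℂ) + A)
        - (t • (1 : Matrix (Fin d) (Fin d) ℂ) + B) = A - B := by abel
    have hid : RB - RA = RB * (A - B) * RA := by
      calc RB - RA
          = RB * (t • (1 : Matrix (Fin d) (Fin d) ℂ) + A) * RA
            - RB * (t • (1 : Matrix (Fin d) (Fin d) ℂ) + B) * RA := by rw [h1', h2']
        _ = RB * ((t • (1 : Matrix (Fin d) (Fin d) ℂ) + A)
            - (t • (1 : Matrix (Fin d) (Fin d) ℂ) + B)) * RA := by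
            rw [Matrix.mul_sub, Matrix.sub_mul]
        _ = RB * (A - B) * RA := by rw [hS]
    rw [heq, hid]
    have hnA : ‖RA‖ ≤ (t + m)⁻¹ := MatLogAux.resolv_norm_le hA hm hα (le_of_lt ht0)
    have hnB : ‖RB‖ ≤ (t + m)⁻¹ := MatLogAux.resolv_norm_le hB hm hβ (le_of_lt ht0)
    have htm : (0:ℝ) < (t + m)⁻¹ := by positivity
    calc ‖RB * (A - B) * RA‖
        ≤ ‖RB * (A - B)‖ * ‖RA‖ := Matrix.l2_opNorm_mul _ _
      _ ≤ (‖RB‖ * ‖A - B‖) * ‖RA‖ :=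
          mul_le_mul_of_nonneg_right (Matrix.l2_opNorm_mul _ _) (norm_nonneg _)
      _ ≤ ((t + m)⁻¹ * ‖A - B‖) * (t + m)⁻¹ := by
          have h0 : (0:ℝ) ≤ ‖A - B‖ := norm_nonneg _
          exact mul_le_mul (mul_le_mul_of_nonneg_right hnB h0) hnA (norm_nonneg _)
            (mul_nonneg (le_of_lt htm) h0)
      _ = ‖A - B‖ * ((t + m) ^ 2)⁻¹ := by
          rw [← inv_pow]
          ring
  rw [hsub]
  have hg : Integrable (fun t : ℝ => ‖A - B‖ * ((t + m) ^ 2)⁻¹) (volume.restrict (Ioi 0)) :=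
    (invsq_integrableOn hm).const_mul _
  have hb := norm_integral_le_of_norm_le hg
    ((ae_restrict_iff' measurableSet_Ioi).2 (ae_of_all _ hbound))
  refine le_trans hb ?_
  rw [integral_const_mul, invsq_integral hm, mul_comm]
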